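/- Let f : ℝⁿ → ℝ be convex, C ⊆ ℝⁿ nonempty closed convex with argmin of f over C nonempty, a ∈ argmin_{C} f, and let φ : [0,∞) → ℝⁿ be absolutely continuous with φ(t) ∈ C for all t and φ'(t) ∈ −(∂f(φ(t)) + N_C(φ(t))) for a.e. t. Then d/dt (½‖φ(t)−a‖²) ≤ min_{x∈C} f(x) − f(φ(t)) ≤ 0 for a.e. t; in particular t ↦ ‖φ(t) − a‖ is nonincreasing. -/

import Mathlib

open Set Pointwise MeasureTheory intervalIntegral
open scoped RealInnerProductSpace

/-- Convex subdifferential of a real-valued function. -/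
def subdiff {n : ℕ} (f : EuclideanSpace ℝ (Fin n) → ℝ) (x : EuclideanSpace ℝ (Fin n)) :
    Set (EuclideanSpace ℝ (Fin n)) :=
  {y | ∀ x', f x + ⟪y, x' - x⟫ ≤ f x'}

/-- Normal cone to a set. -/
def normalCone {n : ℕ} (C : Set (EuclideanSpace ℝ (Fin n))) (x : EuclideanSpace ℝ (Fin n)) :
    Set (EuclideanSpace ℝ (Fin n)) :=
  {v | ∀ x' ∈ C, ⟪v, x' - x⟫ ≤ 0}

section aux
variable {E : Type*} [NormedAddCommGroup E] [InnerProductSpace ℝ E] [CompleteSpace E]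

lemma aux_self_inner (F : ℝ → E) {s t : ℝ}
    (hF : IntegrableOn F (Ioc s t)) :
    Integrable (fun u => ⟪∫ v in Ioc s u, F v, F u⟫) (volume.restrict (Ioc s t)) ∧
    ∫ u in Ioc s t, ⟪∫ v in Ioc s u, F v, F u⟫ =
      (1/2) * ‖∫ v in Ioc s t, F v‖^2 := by
  set μ := volume.restrict (Ioc s t) with hμ
  set ψ := ∫ v in Ioc s t, F v with hψ
  set K : ℝ → ℝ → ℝ := fun u v => if v ≤ u then ⟪F u, F v⟫ else 0 with hK
  have hFm : AEStronglyMeasurable F μ := hF.aestronglyMeasurable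
  have hKm : AEStronglyMeasurable (Function.uncurry K) (μ.prod μ) := by
    have h1 : AEStronglyMeasurable (fun p : ℝ × ℝ => ⟪F p.1, F p.2⟫) (μ.prod μ) :=
      hFm.comp_fst.inner hFm.comp_snd
    have : Function.uncurry K =
        Set.indicator {p : ℝ × ℝ | p.2 ≤ p.1} (fun p => ⟪F p.1, F p.2⟫) := by
      funext p
      simp only [Function.uncurry, Set.indicator_apply, Set.mem_setOf_eq, hK]
    rw [this]
    exact h1.indicator (measurableSet_le measurable_snd measurable_fst)
  have hKi : Integrable (Function.uncurry K) (μ.prod μ) := by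
    refine Integrable.mono' (hF.norm.mul_prod hF.norm) hKm ?_
    refine Filter.Eventually.of_forall fun p => ?_
    simp only [Function.uncurry, hK]
    split_ifs with h
    · exact (abs_real_inner_le_norm _ _).trans le_rfl
    · simpa using mul_nonneg (norm_nonneg _) (norm_nonneg _)
  -- slice in v for fixed u ∈ Ioc s t
  have hslice1 : ∀ u ∈ Ioc s t, (∫ v, K u v ∂μ) = ⟪∫ v in Ioc s u, F v, F u⟫ := by
    intro u hu
    have h1 : (fun v => K u v) = Set.indicator (Iic u) (fun v => ⟪F u, F v⟫) := by
      funext v; simp only [hK, Set.indicator_apply, Set.mem_Iic]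
    rw [hμ, h1, setIntegral_indicator measurableSet_Iic]
    have h2 : Ioc s t ∩ Iic u = Ioc s u := by
      ext w; simp only [mem_inter_iff, mem_Ioc, mem_Iic]
      exact ⟨fun h => ⟨h.1.1, h.2⟩, fun h => ⟨⟨h.1, h.2.trans hu.2⟩, h.2⟩⟩
    rw [h2, real_inner_comm (F u) (∫ v in Ioc s u, F v)]
    exact integral_inner (hF.mono_set (Ioc_subset_Ioc_right hu.2)) (F u)
  -- slice in u for fixed v ∈ Ioc s t
  have hslice2 : ∀ v ∈ Ioc s t,
      (∫ u, K u v ∂μ) = ⟪F v, ψ⟫ - ⟪F v, ∫ w in Ioc s v, F w⟫ := by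
    intro v hv
    have h1 : (fun u => K u v) = Set.indicator (Ici v) (fun u => ⟪F v, F u⟫) := by
      funext u; simp only [hK, Set.indicator_apply, Set.mem_Ici, real_inner_comm]
    rw [hμ, h1, setIntegral_indicator measurableSet_Ici]
    have h2 : Ioc s t ∩ Ici v = Icc v t := by
      ext w; simp only [mem_inter_iff, mem_Ioc, mem_Icc, mem_Ici]
      constructor
      · rintro ⟨⟨_, h2⟩, h3⟩; exact ⟨h3, h2⟩
      · rintro ⟨h1', h2⟩; exact ⟨⟨lt_of_lt_of_le hv.1 h1', h2⟩, h1'⟩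
    rw [h2, integral_Icc_eq_integral_Ioc]
    have h3 : ∫ u in Ioc v t, ⟪F v, F u⟫ = ⟪F v, ∫ u in Ioc v t, F u⟫ :=
      integral_inner (hF.mono_set (Ioc_subset_Ioc_left (le_of_lt hv.1))) (F v)
    have h4 : (∫ u in Ioc s v, F u) + (∫ u in Ioc v t, F u) = ψ := by
      rw [hψ, ← Set.Ioc_union_Ioc_eq_Ioc (le_of_lt hv.1) hv.2]
      exact (setIntegral_union (Set.Ioc_disjoint_Ioc_of_le le_rfl) measurableSet_Ioc
        (hF.mono_set (Ioc_subset_Ioc_right hv.2))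
        (hF.mono_set (Ioc_subset_Ioc_left (le_of_lt hv.1)))).symm
    rw [h3]
    have : (∫ u in Ioc v t, F u) = ψ - ∫ u in Ioc s v, F u := by
      rw [← h4]; abel
    rw [this, inner_sub_right]
  -- the target function is integrable
  have hint1 : Integrable (fun u => ⟪∫ v in Ioc s u, F v, F u⟫) μ := by
    have := hKi.integral_prod_left
    refine this.congr ?_
    filter_upwards [ae_restrict_mem measurableSet_Ioc] with u hu
    exact hslice1 u hu
  refine ⟨hint1, ?_⟩
  set A := ∫ u in Ioc s t, ⟪∫ v in Ioc s u, F v, F u⟫ with hA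
  have hA1 : (∫ u, ∫ v, K u v ∂μ ∂μ) = A := by
    rw [hA, hμ]
    exact setIntegral_congr_fun measurableSet_Ioc hslice1
  have hswap : (∫ u, ∫ v, K u v ∂μ ∂μ) = ∫ v, ∫ u, K u v ∂μ ∂μ :=
    integral_integral_swap (f := K) (μ := μ) (ν := μ) hKi
  have hg : Integrable (fun v => ⟪F v, ψ⟫) μ := by
    have : (fun v => ⟪F v, ψ⟫) = fun v => ⟪ψ, F v⟫ := by
      funext v; exact real_inner_comm _ _
    rw [this]
    exact (innerSL ℝ ψ).integrable_comp hF
  have hh : Integrable (fun v => ⟪F v, ∫ w in Ioc s v, F w⟫) μ := by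
    refine hint1.congr ?_
    exact Filter.Eventually.of_forall fun v => real_inner_comm _ _
  have hB : (∫ v, ∫ u, K u v ∂μ ∂μ) = ‖ψ‖^2 - A := by
    have h1 : (∫ v, ∫ u, K u v ∂μ ∂μ)
        = ∫ v in Ioc s t, (⟪F v, ψ⟫ - ⟪F v, ∫ w in Ioc s v, F w⟫) := by
      rw [hμ]
      exact setIntegral_congr_fun measurableSet_Ioc hslice2
    rw [h1, integral_sub hg hh]
    congr 1
    · have : ∫ v in Ioc s t, ⟪F v, ψ⟫ = ∫ v in Ioc s t, ⟪ψ, F v⟫ :=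
        setIntegral_congr_fun measurableSet_Ioc fun v _ => real_inner_comm _ _
      rw [this, integral_inner hF ψ]
      exact real_inner_self_eq_norm_sq ψ
    · rw [hA]
      exact setIntegral_congr_fun measurableSet_Ioc fun v _ => (real_inner_comm _ _)
  have hfin : A = ‖ψ‖^2 - A := hA1.symm.trans (hswap.trans hB)
  linarith

end aux

theorem stmt1 {n : ℕ}
    (f : EuclideanSpace ℝ (Fin n) → ℝ) (hf : ConvexOn ℝ univ f)
    (C : Set (EuclideanSpace ℝ (Fin n))) (hCne : C.Nonempty) (hCcl : IsClosed C)
    (hCcv : Convex ℝ C)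
    (a : EuclideanSpace ℝ (Fin n)) (haC : a ∈ C) (hamin : ∀ x ∈ C, f a ≤ f x)
    (φ φ' : ℝ → EuclideanSpace ℝ (Fin n))
    -- φ is locally absolutely continuous with a.e. derivative φ'
    (hint : ∀ T : ℝ, IntervalIntegrable φ' volume 0 T)
    (hFTC : ∀ t ∈ Ici (0:ℝ), φ t = φ 0 + ∫ s in (0:ℝ)..t, φ' s)
    (hmem : ∀ t ∈ Ici (0:ℝ), φ t ∈ C)
    -- the differential inclusion φ'(t) ∈ -(∂f(φ(t)) + N_C(φ(t))) a.e.
    (hincl : ∀ᵐ t ∂volume, t ∈ Ici (0:ℝ) →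
      -φ' t ∈ subdiff f (φ t) + normalCone C (φ t)) :
    (∀ᵐ t ∂volume, t ∈ Ici (0:ℝ) →
      ⟪φ t - a, φ' t⟫ ≤ f a - f (φ t) ∧ f a - f (φ t) ≤ 0) ∧
    AntitoneOn (fun t => ‖φ t - a‖) (Ici 0) := by
  have hae : ∀ᵐ t ∂volume, t ∈ Ici (0:ℝ) →
      ⟪φ t - a, φ' t⟫ ≤ f a - f (φ t) ∧ f a - f (φ t) ≤ 0 := by
    filter_upwards [hincl] with t h ht0
    have h2 := h ht0
    rw [Set.mem_add] at h2
    obtain ⟨y, hy, v, hv, hyv⟩ := h2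
    have h3 := hy a
    have h4 := hv a haC
    have h5 : f a - f (φ t) ≤ 0 := by
      have := hamin (φ t) (hmem t ht0); linarith
    refine ⟨?_, h5⟩
    have hφ' : φ' t = -(y + v) := by rw [hyv, neg_neg]
    have key : ⟪φ t - a, φ' t⟫ = ⟪y, a - φ t⟫ + ⟪v, a - φ t⟫ := by
      rw [real_inner_comm (φ' t) (φ t - a), hφ', inner_neg_left, ← inner_neg_right,
        neg_sub, inner_add_left]
    rw [key]
    linarith
  refine ⟨hae, ?_⟩
  intro s hs t ht hst
  simp only
  -- reduce to squared norms
  have key2 : ‖φ t - a‖^2 ≤ ‖φ s - a‖^2 := by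
    have hF : IntegrableOn φ' (Ioc s t) := by
      have h1 : IntervalIntegrable φ' volume s t := (hint s).symm.trans (hint t)
      rwa [intervalIntegrable_iff_integrableOn_Ioc_of_le hst] at h1
    obtain ⟨hint1, hval⟩ := aux_self_inner φ' hF
    set ψ := ∫ v in Ioc s t, φ' v with hψ
    set c := φ s - a with hc
    -- FTC on [s, u]
    have hφeq : ∀ u, s ≤ u → u ≤ t → φ u - a = c + ∫ v in Ioc s u, φ' v := by
      intro u hsu hut
      have h1 := hFTC u (le_trans hs hsu)
      have h2 := hFTC s hs
      have h3 : φ u - φ s = ∫ v in s..u, φ' v := by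
        rw [h1, h2]
        have := integral_interval_sub_left (hint u) (hint s)
        rw [← this]; abel
      have h4 : (∫ v in s..u, φ' v) = ∫ v in Ioc s u, φ' v :=
        intervalIntegral.integral_of_le hsu
      rw [hc]
      have : φ u - a = (φ s - a) + (φ u - φ s) := by abel
      rw [this, h3, h4]
    -- integrand congruence
    have hcongr : ∀ u ∈ Ioc s t,
        ⟪φ u - a, φ' u⟫ = ⟪c, φ' u⟫ + ⟪∫ v in Ioc s u, φ' v, φ' u⟫ := by
      intro u hu
      rw [hφeq u (le_of_lt hu.1) hu.2, inner_add_left]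
    have hgint : Integrable (fun u => ⟪c, φ' u⟫) (volume.restrict (Ioc s t)) :=
      (innerSL ℝ c).integrable_comp hF
    -- integral identity
    have hid : ∫ u in Ioc s t, ⟪φ u - a, φ' u⟫ = ⟪c, ψ⟫ + (1/2) * ‖ψ‖^2 := by
      rw [setIntegral_congr_fun measurableSet_Ioc hcongr, integral_add hgint hint1,
        integral_inner hF c, hval]
    -- integral is nonpositive
    have hnonpos : ∫ u in Ioc s t, ⟪φ u - a, φ' u⟫ ≤ 0 := by
      refine integral_nonpos_of_ae ?_
      have h1 : ∀ᵐ u ∂(volume.restrict (Ioc s t)), u ∈ Ici (0:ℝ) →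
          ⟪φ u - a, φ' u⟫ ≤ f a - f (φ u) ∧ f a - f (φ u) ≤ 0 := ae_restrict_of_ae hae
      filter_upwards [h1, ae_restrict_mem measurableSet_Ioc] with u hu humem
      have h2 := hu (le_trans hs (le_of_lt humem.1))
      exact le_trans h2.1 h2.2
    -- conclude
    have hta : φ t - a = c + ψ := hφeq t hst le_rfl
    have hexp : ‖φ t - a‖^2 = ‖c‖^2 + 2*⟪c, ψ⟫ + ‖ψ‖^2 := by
      rw [hta]; exact norm_add_sq_real c ψ
    have : ⟪c, ψ⟫ + (1/2) * ‖ψ‖^2 ≤ 0 := by rw [← hid]; exact hnonpos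
    have hcs : ‖φ s - a‖^2 = ‖c‖^2 := by rw [hc]
    rw [hexp, hcs]
    linarith
  calc ‖φ t - a‖ = Real.sqrt (‖φ t - a‖^2) := (Real.sqrt_sq (norm_nonneg _)).symm
    _ ≤ Real.sqrt (‖φ s - a‖^2) := Real.sqrt_le_sqrt key2
    _ = ‖φ s - a‖ := Real.sqrt_sq (norm_nonneg _)
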